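/- In the fundamental alcove A of the affine Weyl group of an irreducible root system of rank l, the (l−1)-dimensional volumes of the facets F₀,…,F_l satisfy vol(F₀) : vol(F₁) : ⋯ : vol(F_l) = ‖α₀‖n₀ : ‖α₁‖n₁ : ⋯ : ‖α_l‖n_l, where n₀ = 1, α₀ = −θ, and n₁,…,n_l are the marks. -/

import Mathlib

open scoped RealInnerProductSpace BigOperators

noncomputable section

variable (V : Type) [NormedAddCommGroup V] [InnerProductSpace ℝ V] [FiniteDimensional ℝ V]

/-- A finite, reduced, crystallographic root system in a Euclidean space `V`,
with a chosen set of positive roots and the corresponding simple roots. -/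
structure RootSystemData where
  /-- the rank -/
  l : ℕ
  /-- the simple roots -/
  simple : Fin l → V
  /-- the set of roots -/
  roots : Finset V
  /-- the set of positive roots -/
  pos : Finset V
  pos_subset : pos ⊆ roots
  simple_mem_pos : ∀ i, simple i ∈ pos
  simple_indep : LinearIndependent ℝ simple
  span_roots : Submodule.span ℝ (roots : Set V) = ⊤
  root_ne_zero : ∀ α ∈ roots, α ≠ 0
  neg_mem : ∀ α ∈ roots, -α ∈ roots
  pos_iff : ∀ α ∈ roots, (α ∈ pos ↔ -α ∉ pos)
  pos_combo : ∀ α ∈ pos, ∃ c : Fin l → ℕ, α = ∑ i, (c i : ℝ) • simple i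
  crystal : ∀ α ∈ roots, ∀ β ∈ roots, ∃ n : ℤ, 2 * ⟪β, α⟫ / ⟪α, α⟫ = (n : ℝ)
  reflect_mem : ∀ α ∈ roots, ∀ β ∈ roots, β - (2 * ⟪β, α⟫ / ⟪α, α⟫) • α ∈ roots
  sub_mem : ∀ α ∈ roots, ∀ β ∈ roots, 0 < ⟪α, β⟫ → α ≠ β → α - β ∈ roots
  reduced : ∀ α ∈ roots, ∀ c : ℝ, c • α ∈ roots → c = 1 ∨ c = -1

namespace RootSystemData

open Classical

variable {V}

/-- The pairing `⟨λ, α∨⟩ = 2(λ|α)/(α|α)` of a vector with the coroot of `α`. -/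
def pair (lam α : V) : ℝ := 2 * ⟪lam, α⟫ / ⟪α, α⟫

/-- The orthogonal reflection in the hyperplane orthogonal to `α`. -/
def sRefl (α : V) : V ≃ₗᵢ[ℝ] V := Submodule.reflection ((ℝ ∙ α)ᗮ)

variable (R : RootSystemData V)

/-- Half the sum of the positive roots. -/
def ρ : V := (2 : ℝ)⁻¹ • ∑ φ ∈ R.pos, φ

/-- The (finite) Weyl group, generated by the simple reflections. -/
def W : Subgroup (V ≃ₗᵢ[ℝ] V) :=
  Subgroup.closure (Set.range fun i => sRefl (R.simple i))

/-- The length of a Weyl group element: the minimal length of a word in the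
simple reflections expressing it. -/
def len (w : V ≃ₗᵢ[ℝ] V) : ℕ :=
  sInf {k : ℕ | ∃ f : Fin k → Fin R.l,
    w = (List.ofFn fun j => sRefl (R.simple (f j))).prod}

/-- The inversion set `Φ_w = Φ₊ ∩ wΦ₋`. -/
def inversions (w : V ≃ₗᵢ[ℝ] V) : Finset V :=
  R.pos.filter fun x => -(w.symm x) ∈ R.pos

end RootSystemData

/-- An irreducible root system, together with its highest root `θ`. -/
structure IrredRootSystemData extends RootSystemData V where
  /-- the highest root -/
  θ : V
  θ_mem_pos : θ ∈ pos
  θ_highest : ∀ φ ∈ pos, ∃ c : Fin l → ℕ, θ - φ = ∑ i, (c i : ℝ) • simple i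
  θ_long : ∀ φ ∈ roots, ‖φ‖ ≤ ‖θ‖
  θ_dominant : ∀ i, 0 ≤ ⟪θ, simple i⟫
  irreducible : ∀ s : Finset V, s ⊆ roots →
      (∀ α ∈ s, ∀ β ∈ roots, β ∉ s → ⟪α, β⟫ = 0) → s = ∅ ∨ s = roots

namespace IrredRootSystemData

variable {V} (R : IrredRootSystemData V)

/-- The affine functional `L(φ) = 2(θ−φ|ρ)/(θ|θ)`. -/
def L (φ : V) : ℝ := 2 * ⟪R.θ - φ, R.toRootSystemData.ρ⟫ / ⟪R.θ, R.θ⟫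

/-- A root is long if it has the same length as the highest root. -/
def IsLong (φ : V) : Prop := ‖φ‖ = ‖R.θ‖

/-- The dual Coxeter number `g = ⟨ρ, θ∨⟩ + 1`. -/
def dualCox : ℝ := RootSystemData.pair R.toRootSystemData.ρ R.θ + 1

/-- The affine reflection `s₀(λ) = λ − (⟨λ,θ∨⟩ − g)θ` (scaled so that `s₀ρ = ρ + θ`). -/
def s0 (lam : V) : V := lam - (RootSystemData.pair lam R.θ - R.dualCox) • R.θ

end IrredRootSystemData

open MeasureTheory

variable {V}

/-- The vertices of the fundamental alcove: `0` and `ϖ̌_i / n_i`, where the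
`ϖ̌_i` are the weights dual to the simple roots normalized by
`(ϖ̌_i | α_j) = δ_ij / 2` and the `n_i` are the marks. -/
def alcoveVertex (R : IrredRootSystemData V) (n : Fin R.l → ℕ)
    (cw : Fin R.l → V) : Fin (R.l + 1) → V :=
  Fin.cases 0 fun i => ((n i : ℝ))⁻¹ • cw i

/-- The facet `F_j` of the fundamental alcove: the convex hull of all vertices
other than the `j`-th one. -/
def alcoveFacet (R : IrredRootSystemData V) (n : Fin R.l → ℕ)
    (cw : Fin R.l → V) (j : Fin (R.l + 1)) : Set V :=
  convexHull ℝ (alcoveVertex R n cw '' {i | i ≠ j})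

/-- The quantity `‖α_i‖ n_i` (with `α₀ = −θ`, `n₀ = 1`). -/
def normMark (R : IrredRootSystemData V) (n : Fin R.l → ℕ) :
    Fin (R.l + 1) → ℝ :=
  Fin.cases ‖R.θ‖ fun i => ‖R.simple i‖ * (n i : ℝ)

namespace FacetAux

open MeasureTheory Matrix Module

variable {V : Type} [NormedAddCommGroup V] [InnerProductSpace ℝ V] [FiniteDimensional ℝ V]

/-- Gram matrix of a family of vectors. -/
def gram {d : ℕ} (y : Fin d → V) : Matrix (Fin d) (Fin d) ℝ :=
  Matrix.of fun a b => ⟪y a, y b⟫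

lemma gram_apply {d : ℕ} (y : Fin d → V) (a b : Fin d) : gram y a b = ⟪y a, y b⟫ := rfl

/-- Base × height formula for Gram determinants. -/
lemma det_gram_snoc {d : ℕ} (y : Fin d → V) (z u : V) (t : ℝ)
    (hz : z ∈ Submodule.span ℝ (Set.range y)) (hu : ∀ a, ⟪u, y a⟫ = 0)
    (huu : ⟪u, u⟫ = 1) :
    (gram (Fin.snoc y (z + t • u))).det = t ^ 2 * (gram y).det := by
  classical
  obtain ⟨c, hc⟩ := (Submodule.mem_span_range_iff_exists_fun ℝ).mp hz
  have huy : ∀ a, ⟪y a, u⟫ = 0 := fun a => by rw [real_inner_comm]; exact hu a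
  have huz : ⟪u, z⟫ = 0 := by
    rw [← hc, inner_sum]
    simp [real_inner_smul_right, hu]
  have hzu : ⟪z, u⟫ = 0 := by rw [real_inner_comm]; exact huz
  set Y : Fin (d+1) → V := Fin.snoc y z with hYdef
  set G' : Matrix (Fin (d+1)) (Fin (d+1)) ℝ := gram Y with hG'def
  have hdetG' : G'.det = 0 := by
    rw [← Matrix.exists_mulVec_eq_zero_iff]
    set x : Fin (d+1) → ℝ := Fin.snoc c (-1) with hxdef
    refine ⟨x, ?_, ?_⟩
    · intro h
      have := congrFun h (Fin.last d)
      simp [hxdef, Fin.snoc_last] at this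
    · have hsum : ∑ b : Fin (d+1), x b • Y b = 0 := by
        rw [Fin.sum_univ_castSucc]
        simp only [hxdef, hYdef, Fin.snoc_castSucc, Fin.snoc_last, neg_one_smul]
        rw [hc]; abel
      funext a
      have : (G' *ᵥ x) a = ⟪Y a, ∑ b : Fin (d+1), x b • Y b⟫ := by
        rw [inner_sum]
        simp only [Matrix.mulVec, dotProduct, real_inner_smul_right]
        refine Finset.sum_congr rfl fun b _ => ?_
        rw [mul_comm]; rfl
      rw [this, hsum, inner_zero_right]; rfl
  set e1 : Fin (d+1) → ℝ := Pi.single (Fin.last d) 1 with he1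
  have he1last : e1 (Fin.last d) = 1 := Pi.single_eq_same _ _
  have he1cast : ∀ b : Fin d, e1 (Fin.castSucc b) = 0 :=
    fun b => Pi.single_eq_of_ne (Fin.castSucc_lt_last b).ne _
  have hGram : gram (Fin.snoc y (z + t • u)) =
      G'.updateRow (Fin.last d) (G' (Fin.last d) + t ^ 2 • e1) := by
    ext a b
    rcases eq_or_ne a (Fin.last d) with rfl | ha
    · rw [Matrix.updateRow_self]
      refine Fin.lastCases ?_ (fun b => ?_) b
      · show ⟪(Fin.snoc y (z + t • u) : Fin (d+1) → V) (Fin.last d),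
            (Fin.snoc y (z + t • u) : Fin (d+1) → V) (Fin.last d)⟫
          = (G' (Fin.last d) + t ^ 2 • e1) (Fin.last d)
        simp only [Fin.snoc_last, Pi.add_apply, Pi.smul_apply, he1last, smul_eq_mul, mul_one]
        have : G' (Fin.last d) (Fin.last d) = ⟪z, z⟫ := by
          simp [hG'def, gram_apply, hYdef, Fin.snoc_last]
        rw [this, real_inner_add_add_self, real_inner_smul_left, real_inner_smul_right,
          real_inner_smul_right, huu, hzu]
        ring
      · show ⟪(Fin.snoc y (z + t • u) : Fin (d+1) → V) (Fin.last d),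
            (Fin.snoc y (z + t • u) : Fin (d+1) → V) (Fin.castSucc b)⟫
          = (G' (Fin.last d) + t ^ 2 • e1) (Fin.castSucc b)
        simp only [Fin.snoc_last, Fin.snoc_castSucc, Pi.add_apply, Pi.smul_apply,
          he1cast b, smul_eq_mul, mul_zero, add_zero]
        have : G' (Fin.last d) (Fin.castSucc b) = ⟪z, y b⟫ := by
          simp [hG'def, gram_apply, hYdef, Fin.snoc_last, Fin.snoc_castSucc]
        rw [this, inner_add_left, real_inner_smul_left, hu b]
        ring
    · rw [Matrix.updateRow_ne ha]
      obtain ⟨a', rfl⟩ : ∃ a', Fin.castSucc a' = a := by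
        rcases Fin.eq_castSucc_or_eq_last a with ⟨a', rfl⟩ | rfl
        · exact ⟨a', rfl⟩
        · exact absurd rfl ha
      refine Fin.lastCases ?_ (fun b => ?_) b
      · show ⟪(Fin.snoc y (z + t • u) : Fin (d+1) → V) (Fin.castSucc a'),
            (Fin.snoc y (z + t • u) : Fin (d+1) → V) (Fin.last d)⟫ = G' (Fin.castSucc a') (Fin.last d)
        have : G' (Fin.castSucc a') (Fin.last d) = ⟪y a', z⟫ := by
          simp [hG'def, gram_apply, hYdef, Fin.snoc_last, Fin.snoc_castSucc]
        simp only [Fin.snoc_last, Fin.snoc_castSucc, this]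
        rw [inner_add_right, real_inner_smul_right, huy a']
        ring
      · show ⟪(Fin.snoc y (z + t • u) : Fin (d+1) → V) (Fin.castSucc a'),
            (Fin.snoc y (z + t • u) : Fin (d+1) → V) (Fin.castSucc b)⟫ = G' (Fin.castSucc a') (Fin.castSucc b)
        have : G' (Fin.castSucc a') (Fin.castSucc b) = ⟪y a', y b⟫ := by
          simp [hG'def, gram_apply, hYdef, Fin.snoc_castSucc]
        simp only [Fin.snoc_castSucc, this]
  rw [hGram, Matrix.det_updateRow_add, Matrix.updateRow_eq_self, hdetG',
    Matrix.det_updateRow_smul, zero_add]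
  congr 1
  rw [Matrix.det_succ_row _ (Fin.last d)]
  rw [Finset.sum_eq_single (Fin.last d)]
  · rw [Matrix.updateRow_self]
    have hsub : (G'.updateRow (Fin.last d) e1).submatrix
        (Fin.last d).succAbove (Fin.last d).succAbove = gram y := by
      ext a b
      simp only [Matrix.submatrix_apply, Fin.succAbove_last]
      rw [Matrix.updateRow_ne (Fin.castSucc_lt_last a).ne]
      simp [hG'def, gram_apply, hYdef, Fin.snoc_castSucc]
    rw [hsub, he1last]
    have : ((-1 : ℝ)) ^ ((Fin.last d : ℕ) + (Fin.last d : ℕ)) = 1 :=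
      Even.neg_one_pow ⟨(Fin.last d : ℕ), rfl⟩
    rw [this]; ring
  · intro b _ hb
    rw [Matrix.updateRow_self]
    have : e1 b = 0 := Pi.single_eq_of_ne hb _
    rw [this]; ring
  · intro h
    exact absurd (Finset.mem_univ _) h


/-- The standard corner simplex in Euclidean space. -/
def stdSimplexSet (d : ℕ) : Set (EuclideanSpace ℝ (Fin d)) :=
  convexHull ℝ (insert 0 (Set.range fun a => EuclideanSpace.single a (1 : ℝ)))

/-- The Hausdorff measure of a `d`-dimensional simplex in `V` in terms of the Gram
determinant of its edge vectors. -/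
lemma measure_simplex {d : ℕ} [MeasurableSpace V] [BorelSpace V]
    (y : Fin d → V) (hy : LinearIndependent ℝ y) (b : V) :
    ∃ r : ℝ, r ^ 2 = (gram y).det ∧
      μH[(d : ℝ)] (convexHull ℝ (insert b (Set.range fun a => b + y a)))
        = ENNReal.ofReal |r| * μH[(d : ℝ)] (stdSimplexSet d) := by
  classical
  set U : Submodule ℝ V := Submodule.span ℝ (Set.range y) with hUdef
  have hU : finrank ℝ U = d := by rw [finrank_span_eq_card hy, Fintype.card_fin]
  let ob : OrthonormalBasis (Fin d) ℝ U := (stdOrthonormalBasis ℝ U).reindex (finCongr hU)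
  let ψ : EuclideanSpace ℝ (Fin d) →ₗᵢ[ℝ] V :=
    U.subtypeₗᵢ.comp ob.repr.symm.toLinearIsometry
  let w : Fin d → EuclideanSpace ℝ (Fin d) :=
    fun a => ob.repr ⟨y a, Submodule.subset_span ⟨a, rfl⟩⟩
  have hψw : ∀ a, ψ (w a) = y a := fun a => by
    simp only [ψ, w, LinearIsometry.coe_comp, Function.comp_apply,
      LinearIsometryEquiv.coe_toLinearIsometry, LinearIsometryEquiv.symm_apply_apply]
    rfl
  set A : Matrix (Fin d) (Fin d) ℝ := Matrix.of fun p a => w a p with hAdef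
  set T : EuclideanSpace ℝ (Fin d) →ₗ[ℝ] EuclideanSpace ℝ (Fin d) :=
    Matrix.toEuclideanLin A with hT
  have hTs : ∀ a, T (EuclideanSpace.single a 1) = w a := by
    intro a
    ext p
    have : T (EuclideanSpace.single a 1)
        = (WithLp.equiv 2 _).symm (A *ᵥ (WithLp.equiv 2 _) (EuclideanSpace.single a 1)) := rfl
    rw [this]
    have hsingle : (WithLp.equiv 2 (Fin d → ℝ)) (EuclideanSpace.single a (1:ℝ)) = Pi.single a 1 := by
      rfl
    rw [hsingle]
    show (A *ᵥ Pi.single a 1) p = w a p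
    simp [Matrix.mulVec, dotProduct, Pi.single_apply, hAdef]
  refine ⟨A.det, ?_, ?_⟩
  · have hg : gram y = Aᵀ * A := by
      ext a b
      rw [gram_apply, ← hψw a, ← hψw b, ψ.inner_map_map, Matrix.mul_apply, PiLp.inner_apply]
      simp [hAdef, RCLike.inner_apply, mul_comm]
    rw [hg, Matrix.det_mul, Matrix.det_transpose, sq]
  · set Δ := stdSimplexSet d with hΔ
    set L : EuclideanSpace ℝ (Fin d) →ₗ[ℝ] V := ψ.toLinearMap.comp T with hL
    set f : EuclideanSpace ℝ (Fin d) →ᵃ[ℝ] V :=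
      (AffineEquiv.constVAdd ℝ V b).toAffineMap.comp L.toAffineMap with hf
    have hfapply : ∀ x, f x = b + ψ (T x) := by
      intro x
      simp only [hf, hL, AffineMap.comp_apply, AffineEquiv.coe_toAffineMap,
        LinearMap.coe_toAffineMap, LinearMap.comp_apply, AffineEquiv.constVAdd_apply,
        LinearIsometry.coe_toLinearMap, vadd_eq_add]
    have h0 : f 0 = b := by rw [hfapply 0, map_zero, map_zero, add_zero]
    have h1 : (⇑f ∘ fun a => EuclideanSpace.single a (1:ℝ)) = fun a => b + y a := by
      funext a
      rw [Function.comp_apply, hfapply, hTs, hψw]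
    have himg : convexHull ℝ (insert b (Set.range fun a => b + y a)) = f '' Δ := by
      rw [hΔ, stdSimplexSet, AffineMap.image_convexHull, Set.image_insert_eq,
        ← Set.range_comp, h0, h1]
    rw [himg]
    have hcomp : f '' Δ = (fun v => b + ψ v) '' (T '' Δ) := by
      rw [Set.image_image]
      exact Set.image_congr fun x _ => (hfapply x).symm
    rw [hcomp]
    have hiso : Isometry (fun v : EuclideanSpace ℝ (Fin d) => b + ψ v) := by
      have h1 : Isometry (fun v : V => b + v) :=
        Isometry.of_dist_eq fun x x' => dist_add_left b x x'
      exact h1.comp ψ.isometry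
    rw [hiso.hausdorffMeasure_image (Or.inl (by positivity))]
    have hdetT : LinearMap.det T = A.det := by
      rw [hT, Matrix.toEuclideanLin_eq_toLin, LinearMap.det_toLin]
    have hrank : ((d:ℕ):ℝ) = ((finrank ℝ (EuclideanSpace ℝ (Fin d)) :ℕ):ℝ) := by
      rw [finrank_euclideanSpace_fin]
    rw [hrank, MeasureTheory.Measure.addHaar_image_linearMap _ T Δ, hdetT]

end FacetAux

/-- The `(l−1)`-dimensional volumes of the facets `F₀, …, F_l` of the
fundamental alcove satisfy
`vol(F₀) : ⋯ : vol(F_l) = ‖α₀‖n₀ : ⋯ : ‖α_l‖n_l`. -/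
theorem facet_volume_ratio [MeasurableSpace V] [BorelSpace V]
    (R : IrredRootSystemData V) (hdim : Module.finrank ℝ V = R.l)
    (n : Fin R.l → ℕ) (hn : ∀ i, 0 < n i)
    (hmark : R.θ = ∑ i, (n i : ℝ) • R.simple i)
    (cw : Fin R.l → V)
    (hcw : ∀ i j, ⟪cw i, R.simple j⟫ = if i = j then (1 : ℝ) / 2 else 0) :
    ∀ i j : Fin (R.l + 1),
      μH[(R.l : ℝ) - 1] (alcoveFacet R n cw i) * ENNReal.ofReal (normMark R n j)
        = μH[(R.l : ℝ) - 1] (alcoveFacet R n cw j)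
            * ENNReal.ofReal (normMark R n i) := by
  classical
  intro i j
  rcases Nat.eq_zero_or_pos R.l with hl0 | hlpos
  · have hij : i = j := by
      apply Fin.ext
      have hi := i.isLt; have hj := j.isLt
      omega
    rw [hij]
  obtain ⟨d, hl⟩ : ∃ d, R.l = d + 1 := ⟨R.l - 1, by omega⟩
  set ee : Fin (d + 1) → Fin R.l := fun m => Fin.cast hl.symm m with hee
  have hee_inj : Function.Injective ee := fun a b h => by
    apply Fin.ext
    simpa [hee] using congrArg Fin.val h
  set vv : Fin (d + 1) → V := fun m => alcoveVertex R n cw (ee m).succ with hvv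
  have hvv_eq : ∀ m, vv m = ((n (ee m) : ℝ))⁻¹ • cw (ee m) := fun m => rfl
  have hn' : ∀ c : Fin R.l, ((n c : ℝ)) ≠ 0 := fun c => Nat.cast_ne_zero.mpr (hn c).ne'
  have hip : ∀ (m : Fin (d + 1)) (c : Fin R.l),
      ⟪vv m, R.simple c⟫ = if ee m = c then (2 * (n c : ℝ))⁻¹ else 0 := by
    intro m c
    rw [hvv_eq, real_inner_smul_left, hcw]
    split_ifs with h
    · rw [h]
      rw [div_eq_mul_inv, one_mul, ← mul_inv, mul_comm ((n c : ℝ)) 2]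
    · ring
  have hiθ : ∀ m : Fin (d + 1), ⟪vv m, R.θ⟫ = 1 / 2 := by
    intro m
    rw [hmark, inner_sum]
    rw [Finset.sum_eq_single (ee m)]
    · rw [real_inner_smul_right, hip, if_pos rfl]
      rw [eq_div_iff (two_ne_zero)]
      field_simp [hn' (ee m)]
    · intro c _ hc
      rw [real_inner_smul_right, hip, if_neg hc.symm, mul_zero]
    · intro h
      exact absurd (Finset.mem_univ _) h
  have hiθ' : ∀ m : Fin (d + 1), ⟪R.θ, vv m⟫ = 1 / 2 := fun m => by
    rw [real_inner_comm]; exact hiθ m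
  have hθ0 : R.θ ≠ 0 := R.root_ne_zero _ (R.pos_subset R.θ_mem_pos)
  have hα0 : ∀ c, R.simple c ≠ 0 :=
    fun c => R.root_ne_zero _ (R.pos_subset (R.simple_mem_pos c))
  have hθn : ‖R.θ‖ ≠ 0 := norm_ne_zero_iff.mpr hθ0
  have hvv_ind : LinearIndependent ℝ vv := by
    rw [Fintype.linearIndependent_iff]
    intro g hg m
    have h1 := congrArg (fun x => ⟪x, R.simple (ee m)⟫) hg
    simp only [sum_inner, real_inner_smul_left, inner_zero_left] at h1
    rw [Finset.sum_eq_single m] at h1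
    · rw [hip, if_pos rfl] at h1
      have h2 : (2 * (n (ee m) : ℝ))⁻¹ ≠ 0 := by
        apply inv_ne_zero
        exact mul_ne_zero two_ne_zero (hn' _)
      exact (mul_eq_zero.mp h1).resolve_right h2
    · intro b _ hb
      rw [hip, if_neg (fun hc => hb (hee_inj hc)), mul_zero]
    · intro h
      exact absurd (Finset.mem_univ _) h
  set M : Matrix (Fin (d + 1)) (Fin (d + 1)) ℝ := FacetAux.gram vv with hM
  have hdim' : Module.finrank ℝ V = d + 1 := by rw [hdim, hl]
  have hspan : ∀ x : V, x ≠ 0 → ∀ yy : Fin d → V, LinearIndependent ℝ yy →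
      (∀ a, ⟪x, yy a⟫ = 0) → ∀ zz : V, ⟪x, zz⟫ = 0 →
      zz ∈ Submodule.span ℝ (Set.range yy) := by
    intro x hx yy hyy hperp zz hzz
    have hle : Submodule.span ℝ (Set.range yy) ≤ (ℝ ∙ x)ᗮ := by
      rw [Submodule.span_le]
      rintro _ ⟨a, rfl⟩
      exact Submodule.mem_orthogonal_singleton_iff_inner_right.mpr (hperp a)
    have h1 : Module.finrank ℝ (Submodule.span ℝ (Set.range yy)) = d := by
      rw [finrank_span_eq_card hyy, Fintype.card_fin]
    have h2 : Module.finrank ℝ ((ℝ ∙ x)ᗮ : Submodule ℝ V) = d := by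
      have h3 := Submodule.finrank_add_finrank_orthogonal (K := (ℝ ∙ x))
      rw [finrank_span_singleton hx, hdim'] at h3
      omega
    have h4 := Submodule.eq_of_le_of_finrank_eq hle (by rw [h1, h2])
    rw [h4]
    exact Submodule.mem_orthogonal_singleton_iff_inner_right.mpr hzz
  have hexp : ((R.l : ℝ) - 1) = ((d : ℕ) : ℝ) := by rw [hl]; push_cast; ring
  have key : ∀ k : Fin (R.l + 1), ∃ r : ℝ,
      r ^ 2 = 4 * M.det * (normMark R n k) ^ 2 ∧
      μH[(R.l : ℝ) - 1] (alcoveFacet R n cw k)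
        = ENNReal.ofReal |r| * μH[((d : ℕ) : ℝ)] (FacetAux.stdSimplexSet d) := by
    refine Fin.cases ?_ (fun c => ?_)
    · -- facet 0
      set b : V := vv (Fin.last d) with hb
      set yy : Fin d → V := fun a => vv (Fin.castSucc a) - vv (Fin.last d) with hyy
      have hyy_ind : LinearIndependent ℝ yy := by
        rw [Fintype.linearIndependent_iff]
        intro g hg a
        set G : Fin (d + 1) → ℝ := Fin.snoc g (-(∑ a, g a)) with hG
        have hg' : (∑ a, g a • vv (Fin.castSucc a)) - (∑ a, g a) • vv (Fin.last d) = 0 := by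
          have h5 := hg
          simp only [hyy, smul_sub] at h5
          rw [Finset.sum_sub_distrib, ← Finset.sum_smul] at h5
          exact h5
        have hGsum : ∑ m, G m • vv m = 0 := by
          rw [Fin.sum_univ_castSucc]
          simp only [hG, Fin.snoc_castSucc, Fin.snoc_last, neg_smul]
          rw [← sub_eq_add_neg]
          exact hg'
        have hall := Fintype.linearIndependent_iff.mp hvv_ind G hGsum
        have h6 := hall (Fin.castSucc a)
        rwa [hG, Fin.snoc_castSucc] at h6
      have hset : alcoveVertex R n cw '' {m | m ≠ (0 : Fin (R.l + 1))}
          = insert b (Set.range fun a => b + yy a) := by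
        ext x
        simp only [Set.mem_image, Set.mem_setOf_eq, Set.mem_insert_iff, Set.mem_range]
        constructor
        · rintro ⟨m, hm, rfl⟩
          obtain ⟨m', rfl⟩ := Fin.exists_succ_eq.mpr hm
          have h7 : alcoveVertex R n cw m'.succ = vv (Fin.cast hl m') := rfl
          rw [h7]
          rcases Fin.eq_castSucc_or_eq_last (Fin.cast hl m') with ⟨a, ha⟩ | ha
          · right
            refine ⟨a, ?_⟩
            show vv (Fin.last d) + (vv (Fin.castSucc a) - vv (Fin.last d)) = vv (Fin.cast hl m')
            rw [ha]
            abel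
          · left
            rw [ha]
        · rintro (rfl | ⟨a, rfl⟩)
          · exact ⟨(ee (Fin.last d)).succ, Fin.succ_ne_zero _, rfl⟩
          · refine ⟨(ee (Fin.castSucc a)).succ, Fin.succ_ne_zero _, ?_⟩
            show vv (Fin.castSucc a)
              = vv (Fin.last d) + (vv (Fin.castSucc a) - vv (Fin.last d))
            abel
      set Y : Fin (d + 1) → V := Fin.snoc yy (vv (Fin.last d)) with hY
      have hYcast : ∀ a : Fin d, Y (Fin.castSucc a) = vv (Fin.castSucc a) - vv (Fin.last d) :=
        fun a => by rw [hY, Fin.snoc_castSucc, hyy]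
      have hYlast : Y (Fin.last d) = vv (Fin.last d) := by rw [hY, Fin.snoc_last]
      set N : Matrix (Fin (d + 1)) (Fin (d + 1)) ℝ := Matrix.of fun a b => ⟪Y a, vv b⟫ with hN
      have hdetN : N.det = M.det := by
        apply Matrix.det_eq_of_forall_row_eq_smul_add_const
          (fun a : Fin (d + 1) => if a = Fin.last d then 0 else -1) (Fin.last d) (if_pos rfl)
        intro a b
        rcases eq_or_ne a (Fin.last d) with rfl | ha
        · rw [if_pos rfl]
          show ⟪Y (Fin.last d), vv b⟫ = M (Fin.last d) b + 0 * M (Fin.last d) b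
          rw [hYlast, zero_mul, add_zero]
          rfl
        · rw [if_neg ha]
          obtain ⟨a', rfl⟩ : ∃ a', Fin.castSucc a' = a := by
            rcases Fin.eq_castSucc_or_eq_last a with ⟨a', ha'⟩ | ha'
            · exact ⟨a', ha'.symm⟩
            · exact absurd ha' ha
          show ⟪Y (Fin.castSucc a'), vv b⟫
            = M (Fin.castSucc a') b + (-1) * M (Fin.last d) b
          rw [hYcast, inner_sub_left]
          show ⟪vv (Fin.castSucc a'), vv b⟫ - ⟪vv (Fin.last d), vv b⟫
            = M (Fin.castSucc a') b + (-1) * M (Fin.last d) b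
          show (FacetAux.gram vv) (Fin.castSucc a') b - (FacetAux.gram vv) (Fin.last d) b
            = (FacetAux.gram vv) (Fin.castSucc a') b + (-1) * (FacetAux.gram vv) (Fin.last d) b
          ring
      have hdetY : (FacetAux.gram Y).det = N.det := by
        rw [← Matrix.det_transpose (FacetAux.gram Y), ← Matrix.det_transpose N]
        apply Matrix.det_eq_of_forall_row_eq_smul_add_const
          (fun bb : Fin (d + 1) => if bb = Fin.last d then 0 else -1) (Fin.last d) (if_pos rfl)
        intro bb a
        rcases eq_or_ne bb (Fin.last d) with rfl | hbb
        · rw [if_pos rfl, zero_mul, add_zero]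
          show ⟪Y a, Y (Fin.last d)⟫ = ⟪Y a, vv (Fin.last d)⟫
          rw [hYlast]
        · rw [if_neg hbb]
          obtain ⟨b', rfl⟩ : ∃ b', Fin.castSucc b' = bb := by
            rcases Fin.eq_castSucc_or_eq_last bb with ⟨b', hb'⟩ | hb'
            · exact ⟨b', hb'.symm⟩
            · exact absurd hb' hbb
          show ⟪Y a, Y (Fin.castSucc b')⟫
            = ⟪Y a, vv (Fin.castSucc b')⟫ + (-1) * ⟪Y a, vv (Fin.last d)⟫
          rw [hYcast, inner_sub_right]
          ring
      set u : V := ‖R.θ‖⁻¹ • R.θ with hu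
      set t : ℝ := (2 * ‖R.θ‖)⁻¹ with ht
      have huu : ⟪u, u⟫ = 1 := by
        rw [hu, real_inner_smul_left, real_inner_smul_right,
          real_inner_self_eq_norm_mul_norm]
        field_simp
      have hperpθ : ∀ a, ⟪R.θ, yy a⟫ = 0 := by
        intro a
        show ⟪R.θ, vv (Fin.castSucc a) - vv (Fin.last d)⟫ = 0
        rw [inner_sub_right, hiθ', hiθ', sub_self]
      have hperp : ∀ a, ⟪u, yy a⟫ = 0 := by
        intro a
        rw [hu, real_inner_smul_left, hperpθ, mul_zero]
      have hθu : ⟪R.θ, u⟫ = ‖R.θ‖ := by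
        rw [hu, real_inner_smul_right, real_inner_self_eq_norm_mul_norm]
        field_simp
      set z : V := vv (Fin.last d) - t • u with hz
      have hzmem : z ∈ Submodule.span ℝ (Set.range yy) := by
        apply hspan R.θ hθ0 yy hyy_ind hperpθ
        rw [hz, inner_sub_right, real_inner_smul_right, hθu, hiθ', ht]
        field_simp
        ring
      have hw : vv (Fin.last d) = z + t • u := by rw [hz]; abel
      have hgramY : (FacetAux.gram Y).det = t ^ 2 * (FacetAux.gram yy).det := by
        rw [hY, hw]
        exact FacetAux.det_gram_snoc yy z u t hzmem hperp huu
      have hkey0 : t ^ 2 * (FacetAux.gram yy).det = M.det := by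
        rw [← hgramY, hdetY, hdetN]
      have hG0 : (FacetAux.gram yy).det = 4 * M.det * ‖R.θ‖ ^ 2 := by
        rw [← hkey0, ht]
        field_simp
        ring
      obtain ⟨r, hr2, hrμ⟩ := FacetAux.measure_simplex yy hyy_ind b
      refine ⟨r, ?_, ?_⟩
      · rw [hr2, hG0]
        have h11 : normMark R n 0 = ‖R.θ‖ := rfl
        rw [h11]
      · have hfacet : alcoveFacet R n cw 0
            = convexHull ℝ (insert b (Set.range fun a => b + yy a)) := by
          unfold alcoveFacet
          rw [hset]
        rw [hexp, hfacet]
        exact hrμ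
    · -- facet c.succ
      set c' : Fin (d + 1) := Fin.cast hl c with hc'
      have heec' : ee c' = c := rfl
      set yy : Fin d → V := fun a => vv (c'.succAbove a) with hyy
      have hyy_ind : LinearIndependent ℝ yy :=
        hvv_ind.comp _ (Fin.succAbove_right_injective)
      have hset : alcoveVertex R n cw '' {m | m ≠ c.succ}
          = insert (0 : V) (Set.range fun a => (0 : V) + yy a) := by
        ext x
        simp only [Set.mem_image, Set.mem_setOf_eq, Set.mem_insert_iff, Set.mem_range]
        constructor
        · rintro ⟨m, hm, rfl⟩
          rcases Fin.eq_zero_or_eq_succ m with rfl | ⟨m', rfl⟩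
          · left
            rfl
          · right
            have hm' : Fin.cast hl m' ≠ c' := by
              intro h
              apply hm
              have h12 : m' = c := congrArg ee h
              rw [h12]
            obtain ⟨a, ha⟩ := Fin.exists_succAbove_eq hm'
            refine ⟨a, ?_⟩
            show (0 : V) + vv (c'.succAbove a) = alcoveVertex R n cw m'.succ
            rw [zero_add, ha]
            rfl
        · rintro (rfl | ⟨a, rfl⟩)
          · exact ⟨0, (Fin.succ_ne_zero c).symm, rfl⟩
          · refine ⟨(ee (c'.succAbove a)).succ, ?_, ?_⟩
            · intro h
              have h9 : ee (c'.succAbove a) = c := Fin.succ_injective _ h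
              have h10 : c'.succAbove a = c' := hee_inj (h9.trans heec'.symm)
              exact Fin.succAbove_ne c' a h10
            · show alcoveVertex R n cw (ee (c'.succAbove a)).succ
                = (0 : V) + vv (c'.succAbove a)
              rw [zero_add]
      set σf : Fin (d + 1) → Fin (d + 1) := Fin.snoc (fun a => c'.succAbove a) c' with hσf
      have hσcast : ∀ a : Fin d, σf (Fin.castSucc a) = c'.succAbove a :=
        fun a => by simp [hσf]
      have hσlast : σf (Fin.last d) = c' := by rw [hσf, Fin.snoc_last]
      have hσinj : Function.Injective σf := by
        intro a b hab
        rcases Fin.eq_castSucc_or_eq_last a with ⟨a', rfl⟩ | rfl <;>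
          rcases Fin.eq_castSucc_or_eq_last b with ⟨b', rfl⟩ | rfl
        · rw [hσcast, hσcast] at hab
          exact congrArg Fin.castSucc (Fin.succAbove_right_injective hab)
        · rw [hσcast, hσlast] at hab
          exact absurd hab (Fin.succAbove_ne c' a')
        · rw [hσlast, hσcast] at hab
          exact absurd hab.symm (Fin.succAbove_ne c' b')
        · rfl
      let σe : Equiv.Perm (Fin (d + 1)) :=
        Equiv.ofBijective σf ((Finite.injective_iff_bijective).mp hσinj)
      have hfun : Fin.snoc yy (vv c') = fun m => vv (σf m) := by
        funext m
        rcases Fin.eq_castSucc_or_eq_last m with ⟨a, rfl⟩ | rfl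
        · rw [Fin.snoc_castSucc, hσcast]
        · rw [hσlast, Fin.snoc_last]
      have hYperm : (FacetAux.gram (Fin.snoc yy (vv c'))).det = M.det := by
        have h13 : FacetAux.gram (Fin.snoc yy (vv c')) = M.submatrix σe σe := by
          rw [hfun]
          rfl
        rw [h13, Matrix.det_submatrix_equiv_self]
      have hαn : ‖R.simple c‖ ≠ 0 := norm_ne_zero_iff.mpr (hα0 c)
      set u : V := ‖R.simple c‖⁻¹ • R.simple c with hu
      set t : ℝ := (2 * (n c : ℝ) * ‖R.simple c‖)⁻¹ with ht
      have huu : ⟪u, u⟫ = 1 := by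
        rw [hu, real_inner_smul_left, real_inner_smul_right,
          real_inner_self_eq_norm_mul_norm]
        field_simp
      have hipα : ∀ m : Fin (d + 1), ee m ≠ c → ⟪R.simple c, vv m⟫ = 0 := by
        intro m hm
        rw [real_inner_comm, hip, if_neg hm]
      have hperpα : ∀ a, ⟪R.simple c, yy a⟫ = 0 := by
        intro a
        show ⟪R.simple c, vv (c'.succAbove a)⟫ = 0
        apply hipα
        intro h
        exact Fin.succAbove_ne c' a (hee_inj (h.trans heec'.symm))
      have hperp : ∀ a, ⟪u, yy a⟫ = 0 := fun a => by
        rw [hu, real_inner_smul_left, hperpα, mul_zero]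
      have hαu : ⟪R.simple c, u⟫ = ‖R.simple c‖ := by
        rw [hu, real_inner_smul_right, real_inner_self_eq_norm_mul_norm]
        field_simp
      have hαvv : ⟪R.simple c, vv c'⟫ = (2 * (n c : ℝ))⁻¹ := by
        rw [real_inner_comm, hip, if_pos heec']
      set z : V := vv c' - t • u with hz
      have hzmem : z ∈ Submodule.span ℝ (Set.range yy) := by
        apply hspan (R.simple c) (hα0 c) yy hyy_ind hperpα
        rw [hz, inner_sub_right, real_inner_smul_right, hαu, hαvv, ht]
        field_simp [hn' c]
        ring
      have hw : vv c' = z + t • u := by rw [hz]; abel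
      have hkey1 : t ^ 2 * (FacetAux.gram yy).det = M.det := by
        rw [← hYperm, hw]
        exact (FacetAux.det_gram_snoc yy z u t hzmem hperp huu).symm
      have hGc : (FacetAux.gram yy).det
          = 4 * M.det * (‖R.simple c‖ * (n c : ℝ)) ^ 2 := by
        rw [← hkey1, ht]
        field_simp [hn' c]
        ring
      obtain ⟨r, hr2, hrμ⟩ := FacetAux.measure_simplex yy hyy_ind 0
      refine ⟨r, ?_, ?_⟩
      · rw [hr2, hGc]
        have hnm : normMark R n c.succ = ‖R.simple c‖ * (n c : ℝ) := rfl
        rw [hnm]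
      · have hfacet : alcoveFacet R n cw c.succ
            = convexHull ℝ (insert (0 : V) (Set.range fun a => (0 : V) + yy a)) := by
          unfold alcoveFacet
          rw [hset]
        rw [hexp, hfacet]
        exact hrμ
  have hnm_nonneg : ∀ k, 0 ≤ normMark R n k := by
    intro k
    refine Fin.cases ?_ (fun c => ?_) k
    · exact norm_nonneg _
    · exact mul_nonneg (norm_nonneg _) (Nat.cast_nonneg _)
  obtain ⟨ri, hri2, hriμ⟩ := key i
  obtain ⟨rj, hrj2, hrjμ⟩ := key j
  have habs : |ri| * normMark R n j = |rj| * normMark R n i := by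
    have h1 : (|ri| * normMark R n j) ^ 2 = (|rj| * normMark R n i) ^ 2 := by
      rw [mul_pow, mul_pow, sq_abs, sq_abs, hri2, hrj2]
      ring
    have h2 : 0 ≤ |ri| * normMark R n j := mul_nonneg (abs_nonneg _) (hnm_nonneg j)
    have h3 : 0 ≤ |rj| * normMark R n i := mul_nonneg (abs_nonneg _) (hnm_nonneg i)
    calc |ri| * normMark R n j = Real.sqrt ((|ri| * normMark R n j) ^ 2) :=
          (Real.sqrt_sq h2).symm
      _ = Real.sqrt ((|rj| * normMark R n i) ^ 2) := by rw [h1]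
      _ = |rj| * normMark R n i := Real.sqrt_sq h3
  rw [hriμ, hrjμ, mul_right_comm, mul_right_comm (ENNReal.ofReal |rj|),
    ← ENNReal.ofReal_mul (abs_nonneg _), ← ENNReal.ofReal_mul (abs_nonneg _), habs]
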